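/- If P is an orthogonal projection and A is an effect coexistent with P, then A commutes with P: AP = PA. -/

import Mathlib

noncomputable section

/-- An effect on a complex Hilbert space: a positive operator below the identity. -/
def IsEffect {H : Type*} [NormedAddCommGroup H] [InnerProductSpace ℂ H] [CompleteSpace H]
    (A : H →L[ℂ] H) : Prop :=
  A.IsPositive ∧ ((1 : H →L[ℂ] H) - A).IsPositive

/-- Effects `A`, `B` are coexistent: there are effects `M ≤ A`, `N ≤ I - A` with `M + N = B`. -/
def Coexistent {H : Type*} [NormedAddCommGroup H] [InnerProductSpace ℂ H] [CompleteSpace H]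
    (A B : H →L[ℂ] H) : Prop :=
  ∃ M N : H →L[ℂ] H, IsEffect M ∧ IsEffect N ∧
    (A - M).IsPositive ∧ (((1 : H →L[ℂ] H) - A) - N).IsPositive ∧ M + N = B

/-- A rank-one orthogonal projection. -/
def IsRankOneProjection {H : Type*} [NormedAddCommGroup H] [InnerProductSpace ℂ H]
    [CompleteSpace H] (P : H →L[ℂ] H) : Prop :=
  IsSelfAdjoint P ∧ P ∘L P = P ∧ Module.finrank ℂ (LinearMap.range (P : H →ₗ[ℂ] H)) = 1

/-- The strength function `Λ(B,P) = sup {λ ≥ 0 : λP ≤ B}`. -/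
def strength {H : Type*} [NormedAddCommGroup H] [InnerProductSpace ℂ H] [CompleteSpace H]
    (B P : H →L[ℂ] H) : ℝ :=
  sSup {l : ℝ | 0 ≤ l ∧ (B - (l : ℂ) • P).IsPositive}

abbrev E2 := EuclideanSpace ℂ (Fin 2)

section Aux

open ContinuousLinearMap RCLike
open scoped InnerProductSpace


open ContinuousLinearMap RCLike
open scoped InnerProductSpace

variable {H : Type*} [NormedAddCommGroup H] [InnerProductSpace ℂ H] [CompleteSpace H]

/-- For a positive operator, vanishing of the quadratic form at `x` forces `T x = 0`. -/
lemma IsPositive.apply_eq_zero_of_re_inner_eq_zero' {T : H →L[ℂ] H} (hT : T.IsPositive)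
    {x : H} (hx : re ⟪T x, x⟫_ℂ = 0) : T x = 0 := by
  have hsym0 : (T : H →ₗ[ℂ] H).IsSymmetric :=
    (isSelfAdjoint_iff_isSymmetric).mp hT.isSelfAdjoint
  have hsym : ∀ a b : H, ⟪T a, b⟫_ℂ = ⟪a, T b⟫_ℂ := fun a b => hsym0 a b
  let c : PreInnerProductSpace.Core ℂ H :=
  { inner := fun a b => ⟪a, T b⟫_ℂ
    conj_inner_symm := fun a b => by
      have : (starRingEnd ℂ) ⟪b, T a⟫_ℂ = ⟪a, T b⟫_ℂ := by
        rw [inner_conj_symm]; exact hsym a b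
      exact this
    re_inner_nonneg := fun a => hT.re_inner_nonneg_right a
    add_left := fun a b z => by simp [inner_add_left]
    smul_left := fun a b r => by simp [inner_smul_left, mul_comm] }
  have cs : ‖⟪T x, T x⟫_ℂ‖ * ‖⟪x, T (T x)⟫_ℂ‖ ≤ re ⟪T x, T (T x)⟫_ℂ * re ⟪x, T x⟫_ℂ :=
    @InnerProductSpace.Core.inner_mul_inner_self_le ℂ H _ _ _ c (T x) x
  have hxx : (⟪x, T x⟫_ℂ) = 0 := by
    rw [← hsym x x]
    have hreal : (starRingEnd ℂ) ⟪T x, x⟫_ℂ = ⟪T x, x⟫_ℂ := by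
      rw [inner_conj_symm]; exact (hsym x x).symm
    rw [RCLike.conj_eq_iff_re] at hreal
    rw [← hreal, hx]; simp
  have h1 : (⟪T x, T x⟫_ℂ : ℂ) = (‖T x‖ : ℂ) ^ 2 := inner_self_eq_norm_sq_to_K (T x)
  have hrhs : re (⟪x, T x⟫_ℂ) = 0 := by rw [hxx]; simp
  have h2 : (⟪x, T (T x)⟫_ℂ) = (starRingEnd ℂ) ⟪T x, T x⟫_ℂ := by
    calc ⟪x, T (T x)⟫_ℂ = (starRingEnd ℂ) ⟪T (T x), x⟫_ℂ := (inner_conj_symm _ _).symm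
      _ = (starRingEnd ℂ) ⟪T x, T x⟫_ℂ := by rw [hsym (T x) x]
  have hnrm : ‖(⟪T x, T x⟫_ℂ)‖ = ‖T x‖ ^ 2 := by
    rw [h1, norm_pow]; simp
  have key : ‖T x‖ ^ 2 * ‖T x‖ ^ 2 ≤ 0 := by
    calc ‖T x‖ ^ 2 * ‖T x‖ ^ 2 = ‖(⟪T x, T x⟫_ℂ)‖ * ‖(⟪x, T (T x)⟫_ℂ)‖ := by
          rw [h2, RCLike.norm_conj, hnrm]
      _ ≤ re (⟪T x, T (T x)⟫_ℂ) * re (⟪x, T x⟫_ℂ) := cs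
      _ = 0 := by rw [hrhs, mul_zero]
  have h4 : ‖T x‖ ^ 4 = 0 := le_antisymm (by nlinarith [key]) (by positivity)
  have : ‖T x‖ = 0 := pow_eq_zero_iff (by norm_num : (4:ℕ) ≠ 0) |>.mp h4
  simpa using this

/-- If `M` is positive and `M ≤ P` for a self-adjoint idempotent `P`, then `M` absorbs `P`. -/
lemma absorb_of_le_proj' (P M : H →L[ℂ] H) (hP₁ : IsSelfAdjoint P) (hP₂ : P ∘L P = P)
    (hM : M.IsPositive) (hPM : (P - M).IsPositive) : M ∘L P = M ∧ P ∘L M = M := by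
  have hMP : M ∘L P = M := by
    ext x
    have hz : P (x - P x) = 0 := by
      have := congrArg (fun T => T x) hP₂
      simp only [ContinuousLinearMap.comp_apply] at this ⊢
      simp [map_sub, this]
    set z := x - P x with hzdef
    have h0 : re ⟪M z, z⟫_ℂ = 0 := by
      have h1 : 0 ≤ re ⟪M z, z⟫_ℂ := hM.re_inner_nonneg_left z
      have h2 : 0 ≤ re ⟪(P - M) z, z⟫_ℂ := hPM.re_inner_nonneg_left z
      have h3 : re ⟪(P - M) z, z⟫_ℂ = re ⟪P z, z⟫_ℂ - re ⟪M z, z⟫_ℂ := by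
        simp [ContinuousLinearMap.sub_apply, inner_sub_left]
      have h4 : re ⟪P z, z⟫_ℂ = 0 := by rw [hz]; simp
      rw [h3, h4] at h2
      linarith
    have hMz : M z = 0 := IsPositive.apply_eq_zero_of_re_inner_eq_zero' hM h0
    have hsub : M x - M (P x) = 0 := by rw [← map_sub]; exact hMz
    simpa only [ContinuousLinearMap.comp_apply] using (sub_eq_zero.mp hsub).symm
  refine ⟨hMP, ?_⟩
  have : star (M ∘L P) = star M := congrArg star hMP
  rwa [← ContinuousLinearMap.mul_def, star_mul, hP₁.star_eq, hM.isSelfAdjoint.star_eq,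
    ContinuousLinearMap.mul_def] at this

end Aux

theorem commute_of_coexistent_with_projection {H : Type*} [NormedAddCommGroup H]
    [InnerProductSpace ℂ H] [CompleteSpace H] (P A : H →L[ℂ] H)
    (hP₁ : IsSelfAdjoint P) (hP₂ : P ∘L P = P) (hA : IsEffect A)
    (h : Coexistent P A) :
    A ∘L P = P ∘L A := by
  obtain ⟨M, N, hM, hN, hPM, hPN, hMN⟩ := h
  have hMabs := absorb_of_le_proj' P M hP₁ hP₂ hM.1 hPM
  have hQ₁ : IsSelfAdjoint ((1 : H →L[ℂ] H) - P) := by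
    exact (IsSelfAdjoint.one (H →L[ℂ] H)).sub hP₁
  have hQ₂ : ((1 : H →L[ℂ] H) - P) ∘L ((1 : H →L[ℂ] H) - P) = (1 : H →L[ℂ] H) - P := by
    ext x
    have := congrArg (fun T => T x) hP₂
    simp only [ContinuousLinearMap.comp_apply] at this ⊢
    simp [map_sub, this]
  have hNabs := absorb_of_le_proj' ((1 : H →L[ℂ] H) - P) N hQ₁ hQ₂ hN.1 hPN
  have hNP : N ∘L P = 0 := by
    have h1 : N * ((1 : H →L[ℂ] H) - P) = N := hNabs.1
    rw [mul_sub, mul_one] at h1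
    exact sub_eq_self.mp h1
  have hPN0 : P ∘L N = 0 := by
    have h1 : ((1 : H →L[ℂ] H) - P) * N = N := hNabs.2
    rw [sub_mul, one_mul] at h1
    exact sub_eq_self.mp h1
  rw [← hMN, ContinuousLinearMap.add_comp, ContinuousLinearMap.comp_add,
    hMabs.1, hMabs.2, hNP, hPN0]
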